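/- Let α be a real number that is not a natural number, and let f: ℝ → ℝ be f(x) = (1+e^x)^α. Then for every natural number k, the functions f, f', f'', ..., f^{(k)} span a subspace of C^∞(ℝ) of dimension at least k+1; equivalently, f, f', ..., f^{(k)} are linearly independent. -/

import Mathlib

open Real Finset Polynomial


noncomputable def myphi (α : ℝ) (l : ℕ) (x : ℝ) : ℝ := Real.exp (l * x) * (1 + Real.exp x) ^ (α - l)

noncomputable def mya (α : ℝ) : ℕ → ℕ → ℝ
  | 0, 0 => 1
  | 0, _+1 => 0
  | _+1, 0 => 0
  | j+1, l+1 => (l+1) * mya α j (l+1) + (α - l) * mya α j l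

lemma mya_zero (α : ℝ) : ∀ j l, j < l → mya α j l = 0 := by
  intro j
  induction j with
  | zero => intro l hl; match l, hl with | l+1, _ => rfl
  | succ j ih =>
    intro l hl
    match l, hl with
    | l+1, hl =>
      show (l+1 : ℝ) * mya α j (l+1) + (α - l) * mya α j l = 0
      rw [ih (l+1) (by omega), ih l (by omega)]; ring

lemma mya_diag (α : ℝ) (hα : ∀ n : ℕ, α ≠ n) : ∀ j, mya α j j ≠ 0 := by
  intro j
  induction j with
  | zero => norm_num [mya]
  | succ j ih =>
    show (j+1 : ℝ) * mya α j (j+1) + (α - j) * mya α j j ≠ 0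
    rw [mya_zero α j (j+1) (by omega)]
    have : α - j ≠ 0 := sub_ne_zero.mpr (hα j)
    simp [this, ih]

lemma hasDerivAt_myphi (α : ℝ) (l : ℕ) (x : ℝ) :
    HasDerivAt (myphi α l)
      (l * myphi α l x + (α - l) * myphi α (l+1) x) x := by
  have hpos : (0:ℝ) < 1 + Real.exp x := by positivity
  have h1 : HasDerivAt (fun x : ℝ => Real.exp (l * x)) (l * Real.exp (l * x)) x := by
    simpa [mul_comm] using ((hasDerivAt_id x).const_mul (l:ℝ)).exp
  have h2 : HasDerivAt (fun x : ℝ => (1 + Real.exp x) ^ (α - l))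
      ((α - l) * (1 + Real.exp x) ^ (α - l - 1) * Real.exp x) x := by
    have hb : HasDerivAt (fun x : ℝ => 1 + Real.exp x) (Real.exp x) x :=
      (Real.hasDerivAt_exp x).const_add 1
    have := hb.rpow_const (p := α - (l:ℝ)) (Or.inl hpos.ne'); convert this using 1; ring
  have := h1.mul h2
  convert this using 1
  · rfl
  · rfl
  · rfl
  unfold myphi
  push_cast
  rw [show ((l:ℝ)+1) * x = l * x + x by ring, Real.exp_add,
    show α - ((l:ℝ)+1) = α - l - 1 by ring]
  ring

lemma myphi_eval (α : ℝ) (l : ℕ) {t : ℝ} (ht : t ∈ Set.Ioo (0:ℝ) 1) :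
    myphi α l (Real.log (t / (1 - t))) = t ^ l * (1 - t) ^ (-α) := by
  obtain ⟨ht0, ht1⟩ := ht
  have h1t : (0:ℝ) < 1 - t := by linarith
  have hq : (0:ℝ) < t / (1 - t) := by positivity
  have hexp : Real.exp (Real.log (t / (1 - t))) = t / (1 - t) := Real.exp_log hq
  have hbase : 1 + Real.exp (Real.log (t / (1 - t))) = (1 - t)⁻¹ := by
    rw [hexp]; field_simp; ring
  unfold myphi
  rw [Real.exp_nat_mul, hbase, hexp]
  have h2 : ((1 - t)⁻¹) ^ (α - (l:ℝ)) = (1-t) ^ (l:ℕ) * (1-t) ^ (-α) := by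
    rw [← Real.rpow_neg_one (1-t), ← Real.rpow_mul h1t.le,
      show (-1:ℝ) * (α - l) = (l:ℝ) + (-α) by ring, Real.rpow_add h1t, Real.rpow_natCast]
  rw [h2, div_pow]
  field_simp

lemma myphi_indep (α : ℝ) (n : ℕ) (c : ℕ → ℝ)
    (h : ∀ x : ℝ, ∑ l ∈ Finset.range n, c l * myphi α l x = 0) :
    ∀ l ∈ Finset.range n, c l = 0 := by
  set p : ℝ[X] := ∑ l ∈ Finset.range n, Polynomial.C (c l) * Polynomial.X ^ l with hp
  have hroot : ∀ t ∈ Set.Ioo (0:ℝ) 1, p.IsRoot t := by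
    intro t ht
    have h1t : (0:ℝ) < 1 - t := by linarith [ht.2]
    have := h (Real.log (t / (1 - t)))
    have hsum : (∑ l ∈ Finset.range n, c l * t ^ l) * (1 - t) ^ (-α) = 0 := by
      rw [Finset.sum_mul]
      rw [← this]
      apply Finset.sum_congr rfl
      intro l _
      rw [myphi_eval α l ht]; ring
    have hne : (1 - t) ^ (-α) ≠ 0 := (Real.rpow_pos_of_pos h1t _).ne'
    have hsum0 : ∑ l ∈ Finset.range n, c l * t ^ l = 0 := by
      rcases mul_eq_zero.mp hsum with h' | h'
      · exact h'
      · exact absurd h' hne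
    simp [Polynomial.IsRoot, hp, Polynomial.eval_finset_sum, hsum0]
  have hp0 : p = 0 := by
    apply Polynomial.eq_zero_of_infinite_isRoot
    have hinf : (Set.Ioo (0:ℝ) 1).Infinite := Set.Ioo_infinite (by norm_num)
    exact hinf.mono (fun t ht => hroot t ht)
  intro l hl
  have := congrArg (fun q => Polynomial.coeff q l) hp0
  simp only [hp, Polynomial.finset_sum_coeff, Polynomial.coeff_C_mul,
    Polynomial.coeff_X_pow, Polynomial.coeff_zero, mul_ite, mul_one, mul_zero] at this
  rwa [Finset.sum_ite_eq (Finset.range n) l c, if_pos hl] at this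

lemma iter_expand (α : ℝ) (j : ℕ) :
    iteratedDeriv j (fun x : ℝ => (1 + Real.exp x) ^ α)
      = fun x => ∑ l ∈ Finset.range (j+1), mya α j l * myphi α l x := by
  induction j with
  | zero =>
    funext x
    simp [mya, myphi, iteratedDeriv_zero]
  | succ j ih =>
    funext x
    rw [iteratedDeriv_succ, ih]
    have hD : HasDerivAt (fun x => ∑ l ∈ Finset.range (j+1), mya α j l * myphi α l x)
        (∑ l ∈ Finset.range (j+1),
          mya α j l * (l * myphi α l x + (α - l) * myphi α (l+1) x)) x := by
      apply HasDerivAt.fun_sum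
      intro l _
      exact (hasDerivAt_myphi α l x).const_mul _
    rw [hD.deriv]
    -- rearrange sums
    have split : ∑ l ∈ Finset.range (j+1),
          mya α j l * (l * myphi α l x + (α - l) * myphi α (l+1) x)
        = (∑ l ∈ Finset.range (j+1), (l:ℝ) * mya α j l * myphi α l x)
          + ∑ l ∈ Finset.range (j+1), (α - l) * mya α j l * myphi α (l+1) x := by
      rw [← Finset.sum_add_distrib]; apply Finset.sum_congr rfl; intro l _; ring
    have s1 : ∑ l ∈ Finset.range (j+1), (l:ℝ) * mya α j l * myphi α l x
        = ∑ l ∈ Finset.range (j+1), ((l:ℝ)+1) * mya α j (l+1) * myphi α (l+1) x := by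
      rw [Finset.sum_range_succ' (fun l => (l:ℝ) * mya α j l * myphi α l x) j,
        Finset.sum_range_succ (fun l => ((l:ℝ)+1) * mya α j (l+1) * myphi α (l+1) x) j,
        mya_zero α j (j+1) (by omega)]
      push_cast
      ring
    rw [split, s1, ← Finset.sum_add_distrib,
      Finset.sum_range_succ' (fun l => mya α (j+1) l * myphi α l x) (j+1)]
    have h0 : mya α (j+1) 0 = 0 := rfl
    rw [h0]
    simp only [zero_mul, add_zero]
    apply Finset.sum_congr rfl
    intro l _
    rw [show mya α (j+1) (l+1) = ((l:ℝ)+1) * mya α j (l+1) + (α - l) * mya α j l from rfl]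
    ring

theorem derivatives_linearIndependent (α : ℝ) (hα : ¬∃ n : ℕ, α = n) (k : ℕ) :
    LinearIndependent ℝ
      (fun j : Fin (k + 1) =>
        iteratedDeriv j (fun x : ℝ => (1 + Real.exp x) ^ α)) := by
  have hα' : ∀ n : ℕ, α ≠ n := fun n h => hα ⟨n, h⟩
  rw [Fintype.linearIndependent_iff]
  intro g hg
  -- pointwise
  have hpt : ∀ x : ℝ, ∑ j : Fin (k+1),
      g j * ∑ l ∈ Finset.range (k+1), mya α j l * myphi α l x = 0 := by
    intro x
    have := congrFun hg x
    simp only [Finset.sum_apply, Pi.smul_apply, Pi.zero_apply, smul_eq_mul] at this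
    rw [← this]
    apply Finset.sum_congr rfl
    intro j _
    congr 1
    rw [iter_expand α j]
    exact (Finset.sum_subset (Finset.range_subset_range.mpr (by omega : (j:ℕ)+1 ≤ k+1))
      (fun l _ hl => by rw [mya_zero α j l (by simp at hl; omega), zero_mul])).symm
  have hc : ∀ l ∈ Finset.range (k+1), (∑ j : Fin (k+1), g j * mya α j l) = 0 := by
    apply myphi_indep α (k+1)
    intro x
    rw [← hpt x]
    simp only [Finset.mul_sum]
    rw [Finset.sum_comm]
    apply Finset.sum_congr rfl
    intro l _
    rw [Finset.sum_mul]
    apply Finset.sum_congr rfl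
    intro j _
    ring
  -- matrix argument
  set A : Matrix (Fin (k+1)) (Fin (k+1)) ℝ := Matrix.of fun j l => mya α j l with hA
  have hvm : Matrix.vecMul g A = 0 := by
    funext l
    have := hc l (Finset.mem_range.mpr l.isLt)
    simpa [Matrix.vecMul, dotProduct, hA] using this
  have hdet : A.det ≠ 0 := by
    rw [Matrix.det_of_lowerTriangular A (by
      intro i j hij
      exact mya_zero α i j (by exact hij))]
    exact Finset.prod_ne_zero_iff.mpr fun j _ => mya_diag α hα' j
  have hg0 : g = 0 := by
    have h2 := congrArg (fun v => Matrix.vecMul v A⁻¹) hvm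
    simpa [Matrix.vecMul_vecMul, Matrix.mul_nonsing_inv A (Ne.isUnit hdet),
      Matrix.vecMul_one, Matrix.zero_vecMul] using h2
  exact fun i => congrFun hg0 i
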